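/- arXiv:1207.7025 — 2 statements merged into one kernel-verified Lean document; each statement's English description precedes it below -/
import Mathlib

section
/- Let f : ℝ → ℝ be k times continuously differentiable and let p ≤ k. Define r^{-1} f = (f_a, σ) where f_a = I^k(f^(k)) (base point a) and σ(i) = f^(i)(a) for i < k, σ(i) = 0 otherwise. Define D^p(f_a, σ) = (f_a^(p), D^p σ) with (D^p σ)(i) = σ(i+p). Then R(D^p(r^{-1} f)) = f^(p), where R(g, τ) = g + ∑_i τ(i)/i! (x-a)^i. That is, the paper's operator D^p on pairs realizes ordinary p-fold differentiation. -/
noncomputable def RL (k : ℕ) (a : ℝ) (f : ℝ → ℝ) : ℝ → ℝ :=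
  if k = 0 then f
  else fun x => (1 / (Nat.factorial (k - 1) : ℝ)) * ∫ t in a..x, f t * (x - t) ^ (k - 1)

noncomputable def Tpoly (k : ℕ) (a : ℝ) (f : ℝ → ℝ) : ℝ → ℝ :=
  fun x => ∑ i ∈ Finset.range k, iteratedDeriv i f a / (Nat.factorial i : ℝ) * (x - a) ^ i

open intervalIntegral in
lemma taylor_RL (a : ℝ) (f : ℝ → ℝ) :
    ∀ (k : ℕ), ContDiff ℝ k f → ∀ x, RL k a (iteratedDeriv k f) x = f x - Tpoly k a f x := by
  intro k
  induction k with
  | zero => intro _ x; simp [RL, Tpoly]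
  | succ k ih =>
    intro hf x
    have hfk : ContDiff ℝ k f := hf.of_le (by exact_mod_cast Nat.le_succ k)
    have hck : Continuous (iteratedDeriv k f) :=
      hf.continuous_iteratedDeriv k (by exact_mod_cast Nat.le_succ k)
    have hck1 : Continuous (iteratedDeriv (k + 1) f) :=
      hf.continuous_iteratedDeriv (k + 1) le_rfl
    have hder : ∀ t : ℝ, HasDerivAt (iteratedDeriv k f) (iteratedDeriv (k + 1) f t) t := by
      intro t
      rw [iteratedDeriv_succ]
      exact ((hf.differentiable_iteratedDeriv k (by exact_mod_cast Nat.lt_succ_self k)) t).hasDerivAt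
    rcases k with _ | m
    · -- k = 0 : fundamental theorem of calculus
      have hftc : (∫ t in a..x, iteratedDeriv 1 f t) = f x - f a := by
        have := integral_eq_sub_of_hasDerivAt (f := f) (f' := iteratedDeriv 1 f) (a := a) (b := x)
          (fun t _ => by simpa [iteratedDeriv_zero] using hder t)
          (hck1.intervalIntegrable a x)
        simpa using this
      simp only [RL, Tpoly, if_neg (Nat.one_ne_zero)]
      simp only [Nat.sub_self, Nat.factorial_zero, Nat.cast_one, pow_zero, mul_one, one_div,
        inv_one, one_mul, Finset.sum_range_one, iteratedDeriv_zero]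
      simp at hftc ⊢; exact hftc
    · -- k = m + 1 : integration by parts
      have hpow : ∀ t : ℝ, HasDerivAt (fun t => (x - t) ^ (m + 1))
          ((((m : ℝ) + 1) * (x - t) ^ m) * (-1)) t := by
        intro t
        have h1 : HasDerivAt (fun t : ℝ => x - t) (-1) t := (hasDerivAt_id t).const_sub x
        simpa using h1.fun_pow (m + 1)
      have hibp := integral_mul_deriv_eq_deriv_mul_of_hasDerivAt
        (u := fun t => (x - t) ^ (m + 1)) (v := iteratedDeriv (m + 1) f)
        (u' := fun t => (((m : ℝ) + 1) * (x - t) ^ m) * (-1))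
        (v' := iteratedDeriv (m + 1 + 1) f) (a := a) (b := x)
        (((continuous_const.sub continuous_id).pow (m + 1)).continuousOn)
        hck.continuousOn
        (fun t _ => hpow t) (fun t _ => hder t)
        ((((continuous_const.mul ((continuous_const.sub continuous_id).pow m)).mul
          continuous_const)).intervalIntegrable a x)
        (hck1.intervalIntegrable a x)
      have hibp' : (∫ t in a..x, iteratedDeriv (m + 1 + 1) f t * (x - t) ^ (m + 1))
          = ((m : ℝ) + 1) * (∫ t in a..x, iteratedDeriv (m + 1) f t * (x - t) ^ m)
            - iteratedDeriv (m + 1) f a * (x - a) ^ (m + 1) := by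
        have e3 : (∫ t in a..x, iteratedDeriv (m + 1 + 1) f t * (x - t) ^ (m + 1))
            = ∫ t in a..x, (x - t) ^ (m + 1) * iteratedDeriv (m + 1 + 1) f t := by
          simp_rw [mul_comm]
        have e4 : (∫ t in a..x, ((((m : ℝ) + 1) * (x - t) ^ m) * (-1)) * iteratedDeriv (m + 1) f t)
            = (-((m : ℝ) + 1)) * ∫ t in a..x, iteratedDeriv (m + 1) f t * (x - t) ^ m := by
          rw [← integral_const_mul]
          congr 1; funext t; ring
        rw [e3, hibp, e4]
        ring
      have e1 : RL (m + 1 + 1) a (iteratedDeriv (m + 1 + 1) f) x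
          = (1 / ((Nat.factorial (m + 1)) : ℝ)) *
            ∫ t in a..x, iteratedDeriv (m + 1 + 1) f t * (x - t) ^ (m + 1) := by
        simp [RL]
      have e2 : RL (m + 1) a (iteratedDeriv (m + 1) f) x
          = (1 / ((Nat.factorial m) : ℝ)) *
            ∫ t in a..x, iteratedDeriv (m + 1) f t * (x - t) ^ m := by
        simp [RL]
      have hsplit : Tpoly (m + 1 + 1) a f x = Tpoly (m + 1) a f x
          + iteratedDeriv (m + 1) f a / ((Nat.factorial (m + 1)) : ℝ) * (x - a) ^ (m + 1) := by
        simp [Tpoly, Finset.sum_range_succ]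
      have hIH := ih hfk x
      rw [e2] at hIH
      rw [e1, hibp', hsplit,
        show f x - (Tpoly (m + 1) a f x
            + iteratedDeriv (m + 1) f a / ((Nat.factorial (m + 1)) : ℝ) * (x - a) ^ (m + 1))
          = (f x - Tpoly (m + 1) a f x)
            - iteratedDeriv (m + 1) f a / ((Nat.factorial (m + 1)) : ℝ) * (x - a) ^ (m + 1)
          from by ring, ← hIH]
      have hm : ((Nat.factorial m : ℝ)) ≠ 0 := Nat.cast_ne_zero.mpr (Nat.factorial_ne_zero m)
      have hm2 : ((m : ℝ) + 1) ≠ 0 := by positivity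
      have hm1 : ((Nat.factorial (m + 1) : ℝ)) = ((m : ℝ) + 1) * (Nat.factorial m : ℝ) := by
        push_cast [Nat.factorial_succ]; ring
      rw [hm1]
      field_simp

lemma myIteratedDeriv_zero_fun : ∀ (n : ℕ) (x : ℝ), iteratedDeriv n (fun _ : ℝ => (0 : ℝ)) x = 0 := by
  intro n
  induction n with
  | zero => intro x; simp
  | succ n ih =>
    intro x
    rw [iteratedDeriv_succ']
    simpa using ih x

lemma myIteratedDeriv_add {n : ℕ} {f g : ℝ → ℝ} (hf : ContDiff ℝ n f) (hg : ContDiff ℝ n g)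
    (x : ℝ) : iteratedDeriv n (fun y => f y + g y) x = iteratedDeriv n f x + iteratedDeriv n g x := by
  simp only [← iteratedDerivWithin_univ]
  exact iteratedDerivWithin_add (Set.mem_univ x) uniqueDiffOn_univ hf.contDiffAt.contDiffWithinAt hg.contDiffAt.contDiffWithinAt

lemma myIteratedDeriv_sub {n : ℕ} {f g : ℝ → ℝ} (hf : ContDiff ℝ n f) (hg : ContDiff ℝ n g)
    (x : ℝ) : iteratedDeriv n (fun y => f y - g y) x = iteratedDeriv n f x - iteratedDeriv n g x := by
  simp only [← iteratedDerivWithin_univ]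
  exact iteratedDerivWithin_sub (Set.mem_univ x) uniqueDiffOn_univ hf.contDiffAt.contDiffWithinAt hg.contDiffAt.contDiffWithinAt

lemma myIteratedDeriv_const_mul {n : ℕ} {f : ℝ → ℝ} (hf : ContDiff ℝ n f) (c : ℝ)
    (x : ℝ) : iteratedDeriv n (fun y => c * f y) x = c * iteratedDeriv n f x := by
  simp only [← iteratedDerivWithin_univ]
  exact iteratedDerivWithin_const_mul (Set.mem_univ x) uniqueDiffOn_univ c hf.contDiffAt.contDiffWithinAt

lemma contDiff_monomial (n : ℕ∞) (a : ℝ) (i : ℕ) : ContDiff ℝ n (fun y : ℝ => (y - a) ^ i) :=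
  (contDiff_id.sub contDiff_const).pow i

lemma myIteratedDeriv_sum {n : ℕ} {ι : Type*} (s : Finset ι) (F : ι → ℝ → ℝ)
    (hF : ∀ i ∈ s, ContDiff ℝ n (F i)) (x : ℝ) :
    iteratedDeriv n (fun y => ∑ i ∈ s, F i y) x = ∑ i ∈ s, iteratedDeriv n (F i) x := by
  induction s using Finset.cons_induction with
  | empty => simpa using myIteratedDeriv_zero_fun n x
  | cons i s his ih =>
    simp only [Finset.sum_cons]
    rw [myIteratedDeriv_add (hF i (Finset.mem_cons_self i s))
      (ContDiff.sum fun j hj => hF j (Finset.mem_cons_of_mem hj)) x,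
      ih fun j hj => hF j (Finset.mem_cons_of_mem hj)]

lemma iteratedDeriv_monomial (a : ℝ) :
    ∀ (p i : ℕ) (x : ℝ), iteratedDeriv p (fun y : ℝ => (y - a) ^ i) x
      = if p ≤ i then ((Nat.factorial i : ℝ) / (Nat.factorial (i - p) : ℝ)) * (x - a) ^ (i - p)
        else 0 := by
  intro p
  induction p with
  | zero =>
    intro i x
    simp [div_self (Nat.cast_ne_zero.mpr (Nat.factorial_ne_zero i) : ((Nat.factorial i : ℝ)) ≠ 0)]
  | succ p ih =>
    intro i x
    rw [iteratedDeriv_succ']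
    have hd : deriv (fun y : ℝ => (y - a) ^ i) = fun y => (i : ℝ) * (y - a) ^ (i - 1) := by
      funext y
      have h := (((hasDerivAt_id y).sub_const a).pow i).deriv
      simpa using h
    rw [hd]
    cases i with
    | zero =>
      simp only [Nat.cast_zero, zero_mul]
      rw [myIteratedDeriv_zero_fun]
      simp
    | succ j =>
      simp only [Nat.cast_add, Nat.cast_one, Nat.add_sub_cancel]
      rw [myIteratedDeriv_const_mul (contDiff_monomial _ a j) _ x, ih j x]
      rcases le_or_gt p j with hpj | hpj
      · rw [if_pos hpj, if_pos (Nat.succ_le_succ hpj), Nat.succ_sub_succ]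
        have : ((Nat.factorial (j + 1) : ℝ)) = ((j : ℝ) + 1) * (Nat.factorial j : ℝ) := by
          push_cast [Nat.factorial_succ]; ring
        rw [this]; ring
      · rw [if_neg (by omega), if_neg (by omega), mul_zero]

theorem D_realizes_derivative (k p : ℕ) (a : ℝ) (f : ℝ → ℝ)
    (hf : ContDiff ℝ k f) (hpk : p ≤ k) :
    ∀ x : ℝ,
      iteratedDeriv p (RL k a (iteratedDeriv k f)) x
        + ∑ i ∈ Finset.range k,
            (if i + p < k then iteratedDeriv (i + p) f a else 0)
              / (Nat.factorial i : ℝ) * (x - a) ^ i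
      = iteratedDeriv p f x := by
  intro x
  have hfp : ContDiff ℝ p f := hf.of_le (by exact_mod_cast hpk)
  have hT : ContDiff ℝ p (Tpoly k a f) :=
    ContDiff.sum fun i _ => contDiff_const.mul (contDiff_monomial _ a i)
  have hRL : RL k a (iteratedDeriv k f) = fun y => f y - Tpoly k a f y :=
    funext (taylor_RL a f k hf)
  rw [hRL, myIteratedDeriv_sub hfp hT x]
  have hTp : iteratedDeriv p (Tpoly k a f) x
      = ∑ i ∈ Finset.range (k - p),
          iteratedDeriv (i + p) f a / (Nat.factorial i : ℝ) * (x - a) ^ i := by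
    rw [show Tpoly k a f = fun y => ∑ i ∈ Finset.range k,
        (fun i y => (iteratedDeriv i f a / (Nat.factorial i : ℝ)) * (y - a) ^ i) i y from rfl,
      myIteratedDeriv_sum (Finset.range k) _
        (fun i _ => contDiff_const.mul (contDiff_monomial _ a i)) x]
    have hterm : ∀ i : ℕ,
        iteratedDeriv p (fun y => (iteratedDeriv i f a / (Nat.factorial i : ℝ)) * (y - a) ^ i) x
          = (iteratedDeriv i f a / (Nat.factorial i : ℝ)) *
            (if p ≤ i then ((Nat.factorial i : ℝ) / (Nat.factorial (i - p) : ℝ))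
              * (x - a) ^ (i - p) else 0) := fun i => by
      rw [myIteratedDeriv_const_mul (contDiff_monomial _ a i) _ x, iteratedDeriv_monomial a p i x]
    rw [Finset.sum_congr rfl fun i _ => hterm i]
    rw [Finset.range_eq_Ico, ← Finset.sum_Ico_consecutive _ (Nat.zero_le p) hpk]
    have h0 : ∑ i ∈ Finset.Ico 0 p,
        (iteratedDeriv i f a / (Nat.factorial i : ℝ)) *
          (if p ≤ i then ((Nat.factorial i : ℝ) / (Nat.factorial (i - p) : ℝ))
            * (x - a) ^ (i - p) else 0) = 0 := by
      refine Finset.sum_eq_zero fun i hi => ?_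
      rw [if_neg (by simp at hi; omega), mul_zero]
    rw [h0, zero_add, Finset.sum_Ico_eq_sum_range]
    refine Finset.sum_congr rfl fun i hi => ?_
    rw [if_pos (Nat.le_add_right p i), Nat.add_sub_cancel_left]
    have hne : ((Nat.factorial (p + i) : ℝ)) ≠ 0 :=
      Nat.cast_ne_zero.mpr (Nat.factorial_ne_zero _)
    rw [show i + p = p + i from Nat.add_comm i p]
    field_simp
  have hTsum : ∑ i ∈ Finset.range k,
      (if i + p < k then iteratedDeriv (i + p) f a else 0)
        / (Nat.factorial i : ℝ) * (x - a) ^ i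
      = ∑ i ∈ Finset.range (k - p),
          iteratedDeriv (i + p) f a / (Nat.factorial i : ℝ) * (x - a) ^ i := by
    rw [← Finset.sum_subset (Finset.range_subset_range.mpr (Nat.sub_le k p))
      (fun i hi hni => by
        rw [if_neg (by simp at hi hni; omega)]
        simp)]
    refine Finset.sum_congr rfl fun i hi => ?_
    rw [if_pos (by simp at hi; omega)]
  rw [hTp, hTsum]
  ring
end

section
/- With notation as in the paper (integer orders), for f ∈ C^k and p, q natural numbers with p + q ≤ k: R(D^q(D^p(r^{-1} f))) = f^(p+q). That is, iterated application of the paper's operator on pairs composes correctly along the commuting diagram. -/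
lemma iter_comp (p q : ℕ) (f : ℝ → ℝ) :
    iteratedDeriv q (iteratedDeriv p f) = iteratedDeriv (p + q) f := by
  induction q with
  | zero => simp
  | succ n ih => rw [iteratedDeriv_succ, ih, ← iteratedDeriv_succ]; rfl

lemma taylor_integral (m : ℕ) (a x : ℝ) (f : ℝ → ℝ) (hf : ContDiff ℝ (m + 1) f) :
    (1 / (Nat.factorial m : ℝ)) * ∫ t in a..x, iteratedDeriv (m + 1) f t * (x - t) ^ m
      = f x - Tpoly (m + 1) a f x := by
  have hD : ∀ t : ℝ, HasDerivAt (fun y => taylorWithinEval f m Set.univ y x)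
      (((m.factorial : ℝ)⁻¹ * (x - t) ^ m) • iteratedDerivWithin (m + 1) f Set.univ t) t := by
    intro t
    have := hasDerivWithinAt_taylorWithinEval (s := Set.univ) (s' := Set.univ) (x := x) (y := t)
      (n := m) (f := f) uniqueDiffOn_univ
      (by simp [Filter.univ_mem]) trivial (subset_refl _) (hf.of_le (show ((m : ℕ) : WithTop ℕ∞) ≤ ((m + 1 : ℕ) : WithTop ℕ∞) by exact_mod_cast Nat.le_succ m)).contDiffOn ?_
    · exact this.hasDerivAt (by simp [Filter.univ_mem])
    · rw [iteratedDerivWithin_univ]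
      exact ((hf.differentiable_iteratedDeriv m (by exact_mod_cast Nat.lt_succ_self m)) t).differentiableWithinAt
  have hcont : Continuous (iteratedDeriv (m + 1) f) :=
    hf.continuous_iteratedDeriv (m + 1) (le_refl _)
  have hint : ∫ t in a..x, ((m.factorial : ℝ)⁻¹ * (x - t) ^ m) • iteratedDerivWithin (m + 1) f Set.univ t
      = taylorWithinEval f m Set.univ x x - taylorWithinEval f m Set.univ a x := by
    apply intervalIntegral.integral_eq_sub_of_hasDerivAt (fun t _ => hD t)
    apply Continuous.intervalIntegrable
    simp only [iteratedDerivWithin_univ]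
    fun_prop
  rw [taylorWithinEval_self] at hint
  have hT : taylorWithinEval f m Set.univ a x = Tpoly (m + 1) a f x := by
    rw [taylor_within_apply, Tpoly]
    apply Finset.sum_congr rfl
    intro i _
    rw [iteratedDerivWithin_univ]
    simp [smul_eq_mul]; ring
  have heq : ∫ t in a..x, ((m.factorial : ℝ)⁻¹ * (x - t) ^ m) • iteratedDerivWithin (m + 1) f Set.univ t
      = (m.factorial : ℝ)⁻¹ * ∫ t in a..x, iteratedDeriv (m + 1) f t * (x - t) ^ m := by
    rw [← intervalIntegral.integral_const_mul]
    apply intervalIntegral.integral_congr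
    intro t _
    simp only [iteratedDerivWithin_univ, smul_eq_mul]
    ring
  rw [heq] at hint
  rw [one_div, hint, hT]

lemma RL_eq (m : ℕ) (a : ℝ) (f : ℝ → ℝ) (hf : ContDiff ℝ m f) (x : ℝ) :
    RL m a (iteratedDeriv m f) x = f x - Tpoly m a f x := by
  cases m with
  | zero => simp [RL, Tpoly, iteratedDeriv_zero]
  | succ n =>
    rw [RL]
    simp only [Nat.succ_ne_zero, if_false, Nat.add_sub_cancel]
    exact taylor_integral n a x f hf

lemma Tpoly_hasDerivAt (m : ℕ) (a : ℝ) (f : ℝ → ℝ) (x : ℝ) :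
    HasDerivAt (Tpoly (m + 1) a f) (Tpoly m a (deriv f) x) x := by
  have h : ∀ i ∈ Finset.range (m + 1), HasDerivAt
      (fun y => iteratedDeriv i f a / (Nat.factorial i : ℝ) * (y - a) ^ i)
      (iteratedDeriv i f a / (Nat.factorial i : ℝ) * ((i : ℝ) * (x - a) ^ (i - 1) * 1)) x := by
    intro i _
    exact (((hasDerivAt_id x).sub_const a).pow i).const_mul _
  have H := HasDerivAt.fun_sum h
  have : Tpoly m a (deriv f) x = ∑ i ∈ Finset.range (m + 1),
      iteratedDeriv i f a / (Nat.factorial i : ℝ) * ((i : ℝ) * (x - a) ^ (i - 1) * 1) := by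
    rw [Finset.sum_range_succ']
    simp only [Nat.cast_zero, zero_mul, mul_zero, mul_one, add_zero, Nat.add_sub_cancel]
    rw [Tpoly]
    apply Finset.sum_congr rfl
    intro i _
    rw [← iteratedDeriv_succ']
    rw [Nat.factorial_succ]
    push_cast
    have hi : (Nat.factorial i : ℝ) ≠ 0 := by positivity
    field_simp
  rw [this]
  exact H

lemma main_aux (k n : ℕ) (a : ℝ) (f : ℝ → ℝ) (hf : ContDiff ℝ k f) (hn : n ≤ k) :
    iteratedDeriv n (RL k a (iteratedDeriv k f))
      = fun x => iteratedDeriv n f x - Tpoly (k - n) a (iteratedDeriv n f) x := by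
  induction n with
  | zero =>
    funext x
    simpa [iteratedDeriv_zero] using RL_eq k a f hf x
  | succ n ih =>
    have hn' : n ≤ k := Nat.le_of_succ_le hn
    have hnk : n < k := hn
    have hks : k - n = (k - (n + 1)) + 1 := by omega
    rw [iteratedDeriv_succ, ih hn']
    funext x
    have h1 : HasDerivAt (iteratedDeriv n f) (iteratedDeriv (n + 1) f x) x := by
      rw [iteratedDeriv_succ]
      exact ((hf.differentiable_iteratedDeriv n (by exact_mod_cast hnk)) x).hasDerivAt
    have h2 : HasDerivAt (Tpoly (k - n) a (iteratedDeriv n f))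
        (Tpoly (k - (n + 1)) a (iteratedDeriv (n + 1) f) x) x := by
      rw [hks, show iteratedDeriv (n + 1) f = deriv (iteratedDeriv n f) from iteratedDeriv_succ]
      exact Tpoly_hasDerivAt (k - (n + 1)) a (iteratedDeriv n f) x
    exact (h1.sub h2).deriv

theorem D_iterates_correctly (k p q : ℕ) (a : ℝ) (f : ℝ → ℝ)
    (hf : ContDiff ℝ k f) (hpq : p + q ≤ k) :
    ∀ x : ℝ,
      iteratedDeriv q (iteratedDeriv p (RL k a (iteratedDeriv k f))) x
        + ∑ i ∈ Finset.range k,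
            (if i + p + q < k then iteratedDeriv (i + p + q) f a else 0)
              / (Nat.factorial i : ℝ) * (x - a) ^ i
      = iteratedDeriv (p + q) f x := by
  intro x
  rw [iter_comp p q, main_aux k (p + q) a f hf hpq]
  have hS : ∑ i ∈ Finset.range k,
      (if i + p + q < k then iteratedDeriv (i + p + q) f a else 0)
        / (Nat.factorial i : ℝ) * (x - a) ^ i
      = Tpoly (k - (p + q)) a (iteratedDeriv (p + q) f) x := by
    rw [Tpoly]
    rw [← Finset.sum_subset (Finset.range_subset_range.mpr (Nat.sub_le k (p + q)))]
    · apply Finset.sum_congr rfl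
      intro i hi
      have hik : i + p + q < k := by
        simp only [Finset.mem_range] at hi; omega
      rw [if_pos hik, iter_comp (p + q) i, show p + q + i = i + p + q from by omega]
    · intro i hi hni
      have : ¬ (i + p + q < k) := by
        simp only [Finset.mem_range] at hi hni; omega
      rw [if_neg this, zero_div, zero_mul]
  rw [hS]
  ring
end
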